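/- arXiv:2003.14399 — 2 statements merged into one kernel-verified Lean document; each statement's English description precedes it below -/
import Mathlib

section
/- Let (ξⁿ), (kₙ) be sequences of nonnegative reals and ε, γ, C ≥ 0 constants with γ > 0. Suppose that for all n ≥ 0, (1/2)(ξ_{n+1} - ξ_n) + (kₙ ε)/(2γ²) · ξ_{n+1} ≤ C·kₙ, and suppose kₙ ≤ k for all n. Then for all n, ξ_{n+1} ≤ exp(-ε t_{n+1}/(γ² + ε k))·ξ₀ + 2C·(γ² + εk)/ε · (1 - exp(-ε t_{n+1}/(γ² + εk))), where t_{n+1} = Σ_{i=0}^{n} kᵢ. -/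
set_option maxHeartbeats 2000000 in
theorem stmt_6 (ξ kseq : ℕ → ℝ) (hξ : ∀ n, 0 ≤ ξ n) (hkpos : ∀ n, 0 ≤ kseq n)
    (ε γ C k : ℝ) (hε : 0 < ε) (hγ : 0 < γ) (hC : 0 ≤ C)
    (hkk : ∀ n, kseq n ≤ k)
    (hrec : ∀ n, (1 / 2) * (ξ (n + 1) - ξ n) +
      (kseq n * ε) / (2 * γ ^ 2) * ξ (n + 1) ≤ C * kseq n) :
    ∀ n, ξ (n + 1) ≤
      Real.exp (-(ε * ∑ i ∈ Finset.range (n + 1), kseq i) / (γ ^ 2 + ε * k)) * ξ 0 +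
      2 * C * (γ ^ 2 + ε * k) / ε *
        (1 - Real.exp (-(ε * ∑ i ∈ Finset.range (n + 1), kseq i) / (γ ^ 2 + ε * k))) := by
  have hk0 : 0 ≤ k := (hkpos 0).trans (hkk 0)
  have hP : (0:ℝ) < γ ^ 2 := by positivity
  set D := γ ^ 2 + ε * k with hDdef
  have hDpos : 0 < D := by rw [hDdef]; nlinarith [mul_nonneg hε.le hk0]
  clear_value D
  suffices H : ∀ n, ξ n ≤
      Real.exp (-(ε * ∑ i ∈ Finset.range n, kseq i) / D) * ξ 0 +
      2 * C * D / ε * (1 - Real.exp (-(ε * ∑ i ∈ Finset.range n, kseq i) / D)) by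
    intro n; exact H (n + 1)
  intro n
  induction n with
  | zero => simp
  | succ n ih =>
    set t := ∑ i ∈ Finset.range n, kseq i with ht
    have htn : 0 ≤ t := Finset.sum_nonneg fun i _ => hkpos i
    have hsum : ∑ i ∈ Finset.range (n + 1), kseq i = t + kseq n := Finset.sum_range_succ _ _
    rw [hsum]
    clear_value t
    set b := ε * kseq n / D with hbdef
    have hb : 0 ≤ b := div_nonneg (mul_nonneg hε.le (hkpos n)) hDpos.le
    have hbD : b * D = ε * kseq n := by rw [hbdef]; exact div_mul_cancel₀ _ hDpos.ne'
    clear_value b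
    have hexpand : -(ε * (t + kseq n)) / D = -(ε * t) / D + (-b) := by
      rw [hbdef]; ring
    rw [hexpand, Real.exp_add]
    set E := Real.exp (-(ε * t) / D) with hE
    set X := Real.exp (-b) with hX
    have hE0 : 0 < E := Real.exp_pos _
    have hE1 : E ≤ 1 := by
      have h1 : -(ε * t) / D ≤ 0 := by
        apply div_nonpos_of_nonpos_of_nonneg _ hDpos.le
        nlinarith [mul_nonneg hε.le htn]
      calc E ≤ Real.exp 0 := Real.exp_le_exp.mpr h1
        _ = 1 := Real.exp_zero
    have hX0 : 0 < X := Real.exp_pos _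
    have hX1 : 1 - b ≤ X := by
      have := Real.add_one_le_exp (-b); rw [← hX] at this; linarith
    have hX2 : (1 + b) * X ≤ 1 := by
      have h1 : 1 + b ≤ Real.exp b := by have := Real.add_one_le_exp b; linarith
      have h2 : (1 + b) * X ≤ Real.exp b * X := mul_le_mul_of_nonneg_right h1 hX0.le
      rw [hX, ← Real.exp_add] at h2
      simpa using h2
    clear_value E X
    have key : γ ^ 2 * (ξ (n + 1) - ξ n) + kseq n * ε * ξ (n + 1) ≤ 2 * C * γ ^ 2 * kseq n := by
      have h := hrec n
      have h2 : (2 * γ ^ 2) * ((1 / 2) * (ξ (n + 1) - ξ n) +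
          (kseq n * ε) / (2 * γ ^ 2) * ξ (n + 1)) ≤ (2 * γ ^ 2) * (C * kseq n) :=
        mul_le_mul_of_nonneg_left h (by positivity)
      have heq : (2 * γ ^ 2) * ((1 / 2) * (ξ (n + 1) - ξ n) +
          (kseq n * ε) / (2 * γ ^ 2) * ξ (n + 1)) =
          γ ^ 2 * (ξ (n + 1) - ξ n) + kseq n * ε * ξ (n + 1) := by
        have hγ2 : (γ:ℝ) ^ 2 ≠ 0 := hP.ne'
        field_simp
      rw [heq] at h2
      linarith
    set M := 2 * C * D / ε with hM
    have hM0 : 0 ≤ M := div_nonneg (mul_nonneg (mul_nonneg (by norm_num) hC) hDpos.le) hε.le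
    have hMε : M * ε = 2 * C * D := by rw [hM]; exact div_mul_cancel₀ _ hε.ne'
    clear_value M
    have hεD : ε * D ≠ 0 := (mul_pos hε hDpos).ne'
    have hMb : M * b = 2 * C * kseq n := by
      have h1 : (M * b) * (ε * D) = (2 * C * kseq n) * (ε * D) := by
        calc (M * b) * (ε * D) = (M * ε) * (b * D) := by ring
          _ = (2 * C * D) * (ε * kseq n) := by rw [hMε, hbD]
          _ = (2 * C * kseq n) * (ε * D) := by ring
      exact mul_right_cancel₀ hεD h1
    have hknε : kseq n * ε = b * D := by rw [hbD]; ring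
    have hcoef : 0 < γ ^ 2 + kseq n * ε := by nlinarith [mul_nonneg (hkpos n) hε.le]
    have hγ2D : γ ^ 2 ≤ D * (1 - b) := by
      have h1 : b * D ≤ ε * k := by
        rw [hbD]; exact mul_le_mul_of_nonneg_left (hkk n) hε.le
      nlinarith [h1, hDdef.le, hDdef.ge]
    have hcnn : 0 ≤ γ ^ 2 + b * D := by nlinarith [mul_nonneg hb hDpos.le]
    have piece1 : γ ^ 2 ≤ (γ ^ 2 + kseq n * ε) * X := by
      rw [hknε]
      have h1 : (γ ^ 2 + b * D) * (1 - b) ≤ (γ ^ 2 + b * D) * X :=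
        mul_le_mul_of_nonneg_left hX1 hcnn
      nlinarith [h1, mul_nonneg hb (sub_nonneg.mpr hγ2D)]
    have hc : γ ^ 2 - (γ ^ 2 + b * D) * X ≤ 0 := by
      have := piece1; rw [hknε] at this; linarith
    have hEc : 1 * (γ ^ 2 - (γ ^ 2 + b * D) * X) ≤ E * (γ ^ 2 - (γ ^ 2 + b * D) * X) :=
      mul_le_mul_of_nonpos_right hE1 hc
    have hDγ : 0 ≤ D - γ ^ 2 := by rw [hDdef]; nlinarith [mul_nonneg hε.le hk0]
    have hbound : 0 ≤ b * (D - γ ^ 2) + (γ ^ 2 - (γ ^ 2 + b * D) * X) := by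
      have h1 : (γ ^ 2 + b * D) * ((1 + b) * X) ≤ (γ ^ 2 + b * D) * 1 :=
        mul_le_mul_of_nonneg_left hX2 hcnn
      have h2 : 0 ≤ b ^ 2 * (D - γ ^ 2) := mul_nonneg (sq_nonneg b) hDγ
      nlinarith [h1, h2, hb]
    have piece2 : γ ^ 2 * (1 - E) + γ ^ 2 * b ≤ (γ ^ 2 + kseq n * ε) * (1 - E * X) := by
      rw [hknε]
      nlinarith [hEc, hbound]
    have step1 : (γ ^ 2 + kseq n * ε) * ξ (n + 1) ≤ γ ^ 2 * ξ n + 2 * C * γ ^ 2 * kseq n := by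
      nlinarith [key]
    have step2 : γ ^ 2 * ξ n ≤ γ ^ 2 * (E * ξ 0 + M * (1 - E)) :=
      mul_le_mul_of_nonneg_left ih hP.le
    have h2Ck : 2 * C * γ ^ 2 * kseq n = γ ^ 2 * (M * b) := by rw [hMb]; ring
    have pA : γ ^ 2 * (E * ξ 0) ≤ (γ ^ 2 + kseq n * ε) * X * (E * ξ 0) :=
      mul_le_mul_of_nonneg_right piece1 (mul_nonneg hE0.le (hξ 0))
    have pB : M * (γ ^ 2 * (1 - E) + γ ^ 2 * b) ≤ M * ((γ ^ 2 + kseq n * ε) * (1 - E * X)) :=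
      mul_le_mul_of_nonneg_left piece2 hM0
    rw [← mul_le_mul_iff_right₀ hcoef]
    nlinarith [step1, step2, pA, pB, h2Ck.le, h2Ck.symm.le]
end

section
/- Let (ξⁿ) be nonnegative reals with (1 + δkₙ)ξ_{n+1} ≤ ξₙ + a·kₙ for all n ≥ 0, where δ > 0, a ≥ 0, kₙ ∈ (0, k]. Then ξ_{n+1} ≤ exp(-δ·t^{n+1}/(1 + δk))·ξ₀ + a·(1 + δk)/δ for all n, where t^{n+1} = Σ_{i=0}^{n} kᵢ. In particular limsup_{n→∞} ξⁿ ≤ a(1+δk)/δ whenever t^n → ∞. -/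
open Filter in
theorem stmt_15 (ξ kseq : ℕ → ℝ) (hξ : ∀ n, 0 ≤ ξ n)
    (δ a k : ℝ) (hδ : 0 < δ) (ha : 0 ≤ a)
    (hkpos : ∀ n, 0 < kseq n) (hkk : ∀ n, kseq n ≤ k)
    (hrec : ∀ n, (1 + δ * kseq n) * ξ (n + 1) ≤ ξ n + a * kseq n) :
    (∀ n, ξ (n + 1) ≤
      Real.exp (-(δ * ∑ i ∈ Finset.range (n + 1), kseq i) / (1 + δ * k)) * ξ 0 +
        a * (1 + δ * k) / δ) ∧
    (Tendsto (fun n => ∑ i ∈ Finset.range n, kseq i) atTop atTop →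
      limsup ξ atTop ≤ a * (1 + δ * k) / δ) := by
  have hk0 : 0 < k := lt_of_lt_of_le (hkpos 0) (hkk 0)
  have hK : 0 < 1 + δ * k := by positivity
  set R := a * (1 + δ * k) / δ with hRdef
  have hR0 : 0 ≤ R := by positivity
  have hRδ : R * δ = a * (1 + δ * k) := by
    rw [hRdef]; field_simp
  have key : ∀ n, ξ n ≤
      Real.exp (-(δ * ∑ i ∈ Finset.range n, kseq i) / (1 + δ * k)) * ξ 0 + R := by
    intro n
    induction n with
    | zero => simpa using by linarith [hR0, hξ 0]
    | succ n ih =>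
      have hkn := hkpos n
      have h1 : 0 < 1 + δ * kseq n := by positivity
      have hstep : ξ (n + 1) ≤ (ξ n + a * kseq n) / (1 + δ * kseq n) := by
        rw [le_div_iff₀ h1]
        have := hrec n; nlinarith
      have hexp : 1 / (1 + δ * kseq n) ≤ Real.exp (-(δ * kseq n) / (1 + δ * k)) := by
        have hx : 0 ≤ δ * kseq n := by positivity
        have h2 : 1 - δ * kseq n / (1 + δ * kseq n) ≤
            Real.exp (-(δ * kseq n / (1 + δ * kseq n))) := by
          have := Real.add_one_le_exp (-(δ * kseq n / (1 + δ * kseq n)))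
          linarith
        have heq : 1 - δ * kseq n / (1 + δ * kseq n) = 1 / (1 + δ * kseq n) := by
          field_simp
          ring
        have hmono : Real.exp (-(δ * kseq n / (1 + δ * kseq n))) ≤
            Real.exp (-(δ * kseq n) / (1 + δ * k)) := by
          apply Real.exp_le_exp.mpr
          rw [neg_div, neg_le_neg_iff]
          apply div_le_div_of_nonneg_left hx h1
          nlinarith [hkk n]
        linarith [heq ▸ h2]
      set E := Real.exp (-(δ * ∑ i ∈ Finset.range n, kseq i) / (1 + δ * k)) with hE
      have hE0 : 0 ≤ E := Real.exp_nonneg _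
      have hEsplit : Real.exp (-(δ * ∑ i ∈ Finset.range (n + 1), kseq i) / (1 + δ * k))
          = E * Real.exp (-(δ * kseq n) / (1 + δ * k)) := by
        rw [hE, ← Real.exp_add, Finset.sum_range_succ]
        ring_nf
      have hb1 : E * ξ 0 / (1 + δ * kseq n) ≤
          E * Real.exp (-(δ * kseq n) / (1 + δ * k)) * ξ 0 := by
        have hEξ : 0 ≤ E * ξ 0 := mul_nonneg hE0 (hξ 0)
        calc E * ξ 0 / (1 + δ * kseq n) = E * ξ 0 * (1 / (1 + δ * kseq n)) := by ring
          _ ≤ E * ξ 0 * Real.exp (-(δ * kseq n) / (1 + δ * k)) :=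
              mul_le_mul_of_nonneg_left hexp hEξ
          _ = E * Real.exp (-(δ * kseq n) / (1 + δ * k)) * ξ 0 := by ring
      have hb2 : (R + a * kseq n) / (1 + δ * kseq n) ≤ R := by
        rw [div_le_iff₀ h1]
        nlinarith [mul_nonneg (mul_nonneg ha hδ.le) (mul_nonneg hk0.le hkn.le)]
      have hdiv : (ξ n + a * kseq n) / (1 + δ * kseq n) ≤
          (E * ξ 0 + R + a * kseq n) / (1 + δ * kseq n) :=
        (div_le_div_iff_of_pos_right h1).mpr (by linarith)
      have hsplit : (E * ξ 0 + R + a * kseq n) / (1 + δ * kseq n)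
          = E * ξ 0 / (1 + δ * kseq n) + (R + a * kseq n) / (1 + δ * kseq n) := by
        ring
      rw [hEsplit]
      calc ξ (n + 1) ≤ (E * ξ 0 + R + a * kseq n) / (1 + δ * kseq n) :=
            le_trans hstep hdiv
        _ = E * ξ 0 / (1 + δ * kseq n) + (R + a * kseq n) / (1 + δ * kseq n) := hsplit
        _ ≤ E * Real.exp (-(δ * kseq n) / (1 + δ * k)) * ξ 0 + R := add_le_add hb1 hb2
  refine ⟨fun n => key (n + 1), ?_⟩
  intro hT
  have hlim : Tendsto (fun n => Real.exp (-(δ * ∑ i ∈ Finset.range n, kseq i) / (1 + δ * k)) * ξ 0 + R)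
      atTop (nhds R) := by
    have h1 : Tendsto (fun n => -(δ * ∑ i ∈ Finset.range n, kseq i) / (1 + δ * k)) atTop atBot := by
      apply Tendsto.atBot_div_const hK
      exact tendsto_neg_atTop_atBot.comp (hT.const_mul_atTop hδ)
    have h2 : Tendsto (fun n => Real.exp (-(δ * ∑ i ∈ Finset.range n, kseq i) / (1 + δ * k)) * ξ 0)
        atTop (nhds 0) := by
      have := (Real.tendsto_exp_atBot.comp h1).mul_const (ξ 0)
      simpa using this
    simpa using h2.add_const R
  have hle : ∀ᶠ n in atTop, ξ n ≤
      Real.exp (-(δ * ∑ i ∈ Finset.range n, kseq i) / (1 + δ * k)) * ξ 0 + R :=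
    Eventually.of_forall key
  calc limsup ξ atTop ≤
      limsup (fun n => Real.exp (-(δ * ∑ i ∈ Finset.range n, kseq i) / (1 + δ * k)) * ξ 0 + R) atTop := by
        have hcob : IsBoundedUnder (· ≥ ·) atTop ξ :=
          ⟨0, eventually_map.mpr (Eventually.of_forall fun n => hξ n)⟩
        exact limsup_le_limsup hle hcob.isCoboundedUnder_le hlim.isBoundedUnder_le
    _ = R := hlim.limsup_eq
end
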